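/- arXiv:0909.1852 — 2 statements merged into one kernel-verified Lean document; each statement's English description precedes it below -/
import Mathlib

section
/- (Proposition 1, case x = 1) For every positive integer m and every complex number α ≠ 0, ∑_{k=1}^m k^α = ∑_{j=1}^m C(m+1, j+1) · j! · S(α, j). -/
open Finset

/-- Stirling function of the second kind with complex argument `α`:
`S(α, k) = (1/k!) ∑_{j=1}^k (-1)^{k-j} C(k, j) j^α`. -/
noncomputable def stirlingS (α : ℂ) (k : ℕ) : ℂ :=
  (1 / (Nat.factorial k : ℂ)) *
    ∑ j ∈ Finset.Icc 1 k, (-1 : ℂ) ^ (k - j) * (Nat.choose k j : ℂ) * (j : ℂ) ^ α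

-- orthogonality
lemma ortho (n i : ℕ) (hin : i ≤ n) :
    ∑ j ∈ Icc i n, (-1 : ℤ) ^ (j - i) * (n.choose j) * (j.choose i) =
      if i = n then 1 else 0 := by
  rw [← Finset.Ico_add_one_right_eq_Icc, Finset.sum_Ico_eq_sum_range]
  have h1 : n + 1 - i = (n - i) + 1 := by omega
  rw [h1]
  have h2 : ∀ s ∈ Finset.range ((n - i) + 1),
      (-1 : ℤ) ^ (i + s - i) * (n.choose (i + s)) * ((i + s).choose i) =
      (n.choose i : ℤ) * ((-1) ^ s * ((n - i).choose s)) := by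
    intro s hs
    simp only [Finset.mem_range] at hs
    have hle : i + s ≤ n := by omega
    have := Nat.choose_mul (n := n) (Nat.le_add_right i s)
    rw [Nat.add_sub_cancel_left] at this
    have hc : (n.choose (i + s)) * ((i + s).choose i) = n.choose i * ((n - i).choose s) := by
      rw [this]
    rw [Nat.add_sub_cancel_left, mul_assoc, ← Nat.cast_mul, hc]
    push_cast
    ring
  rw [Finset.sum_congr rfl h2, ← Finset.mul_sum, Int.alternating_sum_range_choose]
  by_cases h : i = n
  · simp [h]
  · have : n - i ≠ 0 := by omega
    simp [this, h]

lemma key (i m : ℕ) (him : i ≤ m) :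
    ∑ j ∈ Icc i m, (-1 : ℤ) ^ (j - i) * ((m + 1).choose (j + 1)) * (j.choose i) = 1 := by
  induction m, him using Nat.le_induction with
  | base => simp
  | succ m him ih =>
    have hsplit : ∀ j ∈ Icc i (m + 1),
        (-1 : ℤ) ^ (j - i) * ((m + 2).choose (j + 1)) * (j.choose i) =
        (-1 : ℤ) ^ (j - i) * ((m + 1).choose (j + 1)) * (j.choose i) +
        (-1 : ℤ) ^ (j - i) * ((m + 1).choose j) * (j.choose i) := by
      intro j hj
      have : (m + 2).choose (j + 1) = (m + 1).choose j + (m + 1).choose (j + 1) :=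
        Nat.choose_succ_succ (m + 1) j
      rw [this]
      push_cast
      ring
    rw [show m + 1 + 1 = m + 2 by rfl, Finset.sum_congr rfl hsplit, Finset.sum_add_distrib]
    have h1 : ∑ j ∈ Icc i (m + 1),
        (-1 : ℤ) ^ (j - i) * ((m + 1).choose (j + 1)) * (j.choose i) = 1 := by
      rw [Finset.sum_Icc_succ_top (by omega : i ≤ m + 1)]
      rw [ih]
      simp [Nat.choose_eq_zero_of_lt (by omega : m + 1 < m + 2)]
    have h2 : ∑ j ∈ Icc i (m + 1),
        (-1 : ℤ) ^ (j - i) * ((m + 1).choose j) * (j.choose i) = 0 := by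
      rw [ortho (m + 1) i (by omega), if_neg (by omega)]
    rw [h1, h2]; ring

theorem stmt3 (m : ℕ) (hm : 0 < m) (α : ℂ) (hα : α ≠ 0) :
    ∑ k ∈ Icc 1 m, (k : ℂ) ^ α =
      ∑ j ∈ Icc 1 m, (Nat.choose (m + 1) (j + 1) : ℂ) * (Nat.factorial j : ℂ) *
        stirlingS α j := by
  have hrhs : ∀ j ∈ Icc 1 m,
      (Nat.choose (m + 1) (j + 1) : ℂ) * (Nat.factorial j : ℂ) * stirlingS α j =
      ∑ i ∈ Icc 1 j, (Nat.choose (m + 1) (j + 1) : ℂ) *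
        ((-1 : ℂ) ^ (j - i) * (Nat.choose j i : ℂ) * (i : ℂ) ^ α) := by
    intro j hj
    have hf : (Nat.factorial j : ℂ) ≠ 0 := Nat.cast_ne_zero.2 (Nat.factorial_ne_zero j)
    rw [stirlingS, mul_assoc, ← mul_assoc (Nat.factorial j : ℂ) (1 / (Nat.factorial j : ℂ)),
      mul_one_div, div_self hf, one_mul, Finset.mul_sum]
  rw [Finset.sum_congr rfl hrhs]
  rw [Finset.sum_comm' (s' := fun i => Icc i m) (t' := Icc 1 m)
    (fun j i => by simp only [Finset.mem_Icc]; omega)]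
  refine Finset.sum_congr rfl fun i hi => ?_
  simp only [Finset.mem_Icc] at hi
  have hk := key i m hi.2
  have : ∑ j ∈ Icc i m, (Nat.choose (m + 1) (j + 1) : ℂ) *
      ((-1 : ℂ) ^ (j - i) * (Nat.choose j i : ℂ) * (i : ℂ) ^ α) =
      (∑ j ∈ Icc i m, (-1 : ℤ) ^ (j - i) * ((m + 1).choose (j + 1)) * (j.choose i) : ℤ) *
        (i : ℂ) ^ α := by
    push_cast
    rw [Finset.sum_mul]
    exact Finset.sum_congr rfl fun j _ => by ring
  rw [this, hk]
  push_cast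
  ring
end

section
/- (Proposition 4, first identity) For every positive integer m and every complex number α ≠ 0, ∑_{k=1}^m H_k · k^α = ∑_{j=1}^m j! · S(α, j) · C(m+1, j+1) · (H_{m+1} − 1/(j+1)). -/
open Finset

lemma key_inner (k i : ℕ) (hi1 : 1 ≤ i) (hik : i ≤ k) :
    ∑ j ∈ Icc 1 k, (-1 : ℂ) ^ (j - i) * (Nat.choose j i : ℂ) * (Nat.choose k j : ℂ) =
      if i = k then 1 else 0 := by
  rw [← Finset.sum_subset (Finset.Icc_subset_Icc_left hi1)
    (fun j hj hj' => by
      have hji : j < i := by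
        by_contra hc
        push_neg at hc
        exact hj' (mem_Icc.mpr ⟨hc, (mem_Icc.mp hj).2⟩)
      simp [Nat.choose_eq_zero_of_lt hji])]
  rw [← Finset.Ico_add_one_right_eq_Icc, Finset.sum_Ico_eq_sum_range]
  have hrw : ∀ t ∈ range (k + 1 - i),
      (-1 : ℂ) ^ ((i + t) - i) * (Nat.choose (i + t) i : ℂ) * (Nat.choose k (i + t) : ℂ)
        = (Nat.choose k i : ℂ) * ((-1 : ℂ) ^ t * (Nat.choose (k - i) t : ℂ)) := by
    intro t ht
    have htk : i + t ≤ k := by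
      have := mem_range.mp ht; omega
    have h := Nat.choose_mul (n := k) (Nat.le_add_right i t)
    have h2 := congrArg (fun n : ℕ => (n : ℂ)) h
    push_cast at h2
    have e : i + t - i = t := by omega
    simp only [e] at h2 ⊢
    linear_combination (-1 : ℂ) ^ t * h2
  rw [Finset.sum_congr rfl hrw, ← Finset.mul_sum]
  have hr : k + 1 - i = (k - i) + 1 := by omega
  rw [hr]
  have halt : ∑ t ∈ range ((k - i) + 1), ((-1 : ℂ) ^ t * (Nat.choose (k - i) t : ℂ))
      = if k - i = 0 then 1 else 0 := by
    have h := @Int.alternating_sum_range_choose (k - i)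
    exact_mod_cast congrArg (fun z : ℤ => (z : ℂ)) h
  rw [halt]
  rcases eq_or_lt_of_le hik with h | h
  · simp [h, Nat.sub_self]
  · have h1 : k - i ≠ 0 := by omega
    have h2 : i ≠ k := by omega
    simp [h1, h2]

lemma powEq (α : ℂ) (k : ℕ) (hk : 1 ≤ k) :
    (k : ℂ) ^ α = ∑ j ∈ Icc 1 k, (Nat.factorial j : ℂ) * stirlingS α j * (Nat.choose k j : ℂ) := by
  have hstep : ∀ j ∈ Icc 1 k, (Nat.factorial j : ℂ) * stirlingS α j * (Nat.choose k j : ℂ)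
      = ∑ i ∈ Icc 1 k, (-1 : ℂ) ^ (j - i) * (Nat.choose j i : ℂ) * (Nat.choose k j : ℂ) * (i : ℂ) ^ α := by
    intro j hj
    rcases mem_Icc.mp hj with ⟨hj1, hjk⟩
    rw [stirlingS, ← mul_assoc, mul_one_div,
      div_self (by exact_mod_cast Nat.factorial_ne_zero j), one_mul]
    rw [← Finset.sum_subset (Finset.Icc_subset_Icc_right hjk)
      (fun i hi hi' => by
        have hji : j < i := by
          by_contra hc
          push_neg at hc
          exact hi' (mem_Icc.mpr ⟨(mem_Icc.mp hi).1, hc⟩)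
        simp [Nat.choose_eq_zero_of_lt hji])]
    rw [Finset.sum_mul]
    apply Finset.sum_congr rfl
    intro i hi
    ring
  rw [Finset.sum_congr rfl hstep, Finset.sum_comm]
  have hinner : ∀ i ∈ Icc 1 k,
      ∑ j ∈ Icc 1 k, (-1 : ℂ) ^ (j - i) * (Nat.choose j i : ℂ) * (Nat.choose k j : ℂ) * (i : ℂ) ^ α
        = if i = k then (i : ℂ) ^ α else 0 := by
    intro i hi
    rcases mem_Icc.mp hi with ⟨h1, h2⟩
    rw [← Finset.sum_mul, key_inner k i h1 h2, ite_mul, one_mul, zero_mul]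
  rw [Finset.sum_congr rfl hinner,
    Finset.sum_ite_eq' (Icc 1 k) k (fun i => (i : ℂ) ^ α)]
  simp [hk]

lemma step_alg (x y a b H : ℂ) (hx : x ≠ 0) (hy : y ≠ 0)
    (hkey : x * (a + b) = y * a) :
    b * (H - 1/x) + H * a = (a + b) * (H + 1/y - 1/x) := by
  field_simp
  linear_combination (-1 : ℂ) * hkey

lemma harmSum (j : ℕ) (hj : 1 ≤ j) (m : ℕ) :
    ∑ k ∈ Icc 1 m, ((harmonic k : ℚ) : ℂ) * (Nat.choose k j : ℂ)
      = (Nat.choose (m + 1) (j + 1) : ℂ) * (((harmonic (m + 1) : ℚ) : ℂ) - 1 / ((j : ℂ) + 1)) := by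
  induction m with
  | zero =>
    simp [Nat.choose_eq_zero_of_lt (by omega : 1 < j + 1)]
  | succ n ih =>
    rw [Finset.sum_Icc_succ_top (by omega : 1 ≤ n + 1), ih]
    have hj1 : ((j : ℂ) + 1) ≠ 0 := by
      have : ((j + 1 : ℕ) : ℂ) ≠ 0 := Nat.cast_ne_zero.mpr (by omega)
      push_cast at this; exact this
    have hn2 : ((n : ℂ) + 2) ≠ 0 := by
      have : ((n + 2 : ℕ) : ℂ) ≠ 0 := Nat.cast_ne_zero.mpr (by omega)
      push_cast at this; exact this
    have hH : ((harmonic (n + 1 + 1) : ℚ) : ℂ) = ((harmonic (n + 1) : ℚ) : ℂ) + 1 / ((n : ℂ) + 2) := by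
      rw [harmonic_succ]
      push_cast
      ring
    have hpascal : (Nat.choose (n + 2) (j + 1) : ℂ)
        = (Nat.choose (n + 1) j : ℂ) + (Nat.choose (n + 1) (j + 1) : ℂ) := by
      rw [Nat.choose_succ_succ (n + 1) j]
      push_cast
      ring
    have hkey : ((j : ℂ) + 1) * ((Nat.choose (n + 1) j : ℂ) + (Nat.choose (n + 1) (j + 1) : ℂ))
        = ((n : ℂ) + 2) * (Nat.choose (n + 1) j : ℂ) := by
      have h : (n + 2) * Nat.choose (n + 1) j = Nat.choose (n + 2) (j + 1) * (j + 1) :=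
        Nat.add_one_mul_choose_eq (n + 1) j
      have h2 : ((n : ℂ) + 2) * (Nat.choose (n + 1) j : ℂ)
          = (Nat.choose (n + 2) (j + 1) : ℂ) * ((j : ℂ) + 1) := by exact_mod_cast h
      rw [← hpascal]
      linear_combination -h2
    rw [show n + 1 + 1 = n + 2 from rfl, hH, hpascal]
    exact step_alg _ _ _ _ _ hj1 hn2 hkey

theorem stmt11 (m : ℕ) (hm : 0 < m) (α : ℂ) (hα : α ≠ 0) :
    ∑ k ∈ Icc 1 m, ((harmonic k : ℚ) : ℂ) * (k : ℂ) ^ α =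
      ∑ j ∈ Icc 1 m, (Nat.factorial j : ℂ) * stirlingS α j *
        (Nat.choose (m + 1) (j + 1) : ℂ) *
        (((harmonic (m + 1) : ℚ) : ℂ) - 1 / ((j : ℂ) + 1)) := by
  have h1 : ∀ k ∈ Icc 1 m, ((harmonic k : ℚ) : ℂ) * (k : ℂ) ^ α
      = ∑ j ∈ Icc 1 m, ((harmonic k : ℚ) : ℂ) * ((Nat.factorial j : ℂ) * stirlingS α j) * (Nat.choose k j : ℂ) := by
    intro k hk
    rcases mem_Icc.mp hk with ⟨hk1, hkm⟩
    rw [powEq α k hk1, Finset.mul_sum]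
    rw [← Finset.sum_subset (Finset.Icc_subset_Icc_right hkm)
      (fun j hj hj' => by
        have hkj : k < j := by
          by_contra hc
          push_neg at hc
          exact hj' (mem_Icc.mpr ⟨(mem_Icc.mp hj).1, hc⟩)
        simp [Nat.choose_eq_zero_of_lt hkj])]
    apply Finset.sum_congr rfl
    intro j hj
    ring
  rw [Finset.sum_congr rfl h1, Finset.sum_comm]
  apply Finset.sum_congr rfl
  intro j hj
  rcases mem_Icc.mp hj with ⟨hj1, hjm⟩
  have hfac : ∀ k ∈ Icc 1 m, ((harmonic k : ℚ) : ℂ) * ((Nat.factorial j : ℂ) * stirlingS α j) * (Nat.choose k j : ℂ)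
      = ((Nat.factorial j : ℂ) * stirlingS α j) * (((harmonic k : ℚ) : ℂ) * (Nat.choose k j : ℂ)) := by
    intro k hk; ring
  rw [Finset.sum_congr rfl hfac, ← Finset.mul_sum, harmSum j hj1 m]
  ring
end
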